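/- arXiv:2605.17607 — 5 statements merged into one kernel-verified Lean document; each statement's English description precedes it below -/
import Mathlib

section
/- Define the symmetric Minty pairing M(β) = ∫_0^1 (β(c) - β*(c)) · (1 - c - (β(c)-c)/β'(c)) dc where β*(c) = (1+c)/2. For every k ∈ ℕ, the piecewise linear function β_k defined by β_k(c) = 1/2 + c/5 for c < 1/(k+2), β_k(c) = (5k+4)/(10(k+2)) + (4/5)c for 1/(k+2) ≤ c < 2/(k+2), and β_k(c) = (1+c)/2 for c ≥ 2/(k+2), is continuous, satisfies β_k(1) = 1, has β_k' ≥ 1/5 a.e., and satisfies M(β_k) > 0. -/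
open MeasureTheory

/-- The piecewise-linear perturbation `β_k` of the BNE `β*(c) = (1+c)/2`. -/
noncomputable def betaK (k : ℕ) (c : ℝ) : ℝ :=
  if c < 1 / ((k : ℝ) + 2) then 1 / 2 + c / 5
  else if c < 2 / ((k : ℝ) + 2) then (5 * (k : ℝ) + 4) / (10 * ((k : ℝ) + 2)) + (4 / 5) * c
  else (1 + c) / 2

/-- The symmetric Minty pairing of `β` against the BNE `β*(c) = (1+c)/2`. -/
noncomputable def mintyPairing (β : ℝ → ℝ) : ℝ :=
  ∫ c in (0 : ℝ)..1, (β c - (1 + c) / 2) * (1 - c - (β c - c) / deriv β c)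

namespace BKaux

open Set Filter intervalIntegral

variable (k : ℕ)

lemma hn0 : (0:ℝ) < (k:ℝ) + 2 := by positivity

lemma hn2 : (2:ℝ) ≤ (k:ℝ) + 2 := by
  have : (0:ℝ) ≤ (k:ℝ) := Nat.cast_nonneg k
  linarith

lemma ha0 : 0 < 1 / ((k:ℝ) + 2) := by positivity

lemma hab : 1 / ((k:ℝ) + 2) < 2 / ((k:ℝ) + 2) := by
  have h := hn0 k
  rw [div_lt_div_iff₀ h h]; nlinarith

lemma hb1 : 2 / ((k:ℝ) + 2) ≤ 1 := by
  rw [div_le_one (hn0 k)]; exact hn2 k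

lemma betaK_left {c : ℝ} (h : c < 1 / ((k:ℝ) + 2)) :
    betaK k c = 1 / 2 + c / 5 := if_pos h

lemma betaK_mid {c : ℝ} (h1 : 1 / ((k:ℝ) + 2) ≤ c) (h2 : c < 2 / ((k:ℝ) + 2)) :
    betaK k c = (5 * (k : ℝ) + 4) / (10 * ((k : ℝ) + 2)) + (4 / 5) * c := by
  rw [betaK, if_neg (not_lt.2 h1), if_pos h2]

lemma betaK_right {c : ℝ} (h : 2 / ((k:ℝ) + 2) ≤ c) :
    betaK k c = (1 + c) / 2 := by
  have h1 : ¬ c < 1 / ((k:ℝ) + 2) := not_lt.2 (le_trans (hab k).le h)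
  rw [betaK, if_neg h1, if_neg (not_lt.2 h)]

lemma deriv_left {c : ℝ} (h : c < 1 / ((k:ℝ) + 2)) :
    deriv (betaK k) c = 1 / 5 := by
  have he : betaK k =ᶠ[nhds c] fun x => 1 / 2 + x / 5 :=
    Filter.eventuallyEq_of_mem (Iio_mem_nhds h) (fun x hx => betaK_left k hx)
  rw [he.deriv_eq]
  have : HasDerivAt (fun x : ℝ => 1 / 2 + x / 5) (1 / 5) c := by
    simpa using ((hasDerivAt_id c).div_const 5).const_add (1/2 : ℝ)
  exact this.deriv

lemma deriv_mid {c : ℝ} (h1 : 1 / ((k:ℝ) + 2) < c) (h2 : c < 2 / ((k:ℝ) + 2)) :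
    deriv (betaK k) c = 4 / 5 := by
  have he : betaK k =ᶠ[nhds c]
      fun x => (5 * (k : ℝ) + 4) / (10 * ((k : ℝ) + 2)) + (4 / 5) * x :=
    Filter.eventuallyEq_of_mem (Ioo_mem_nhds h1 h2)
      (fun x hx => betaK_mid k hx.1.le hx.2)
  rw [he.deriv_eq]
  have : HasDerivAt
      (fun x : ℝ => (5 * (k : ℝ) + 4) / (10 * ((k : ℝ) + 2)) + (4 / 5) * x) (4 / 5) c := by
    simpa using ((hasDerivAt_id c).const_mul (4/5 : ℝ)).const_add
      ((5 * (k : ℝ) + 4) / (10 * ((k : ℝ) + 2)))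
  exact this.deriv

lemma deriv_right {c : ℝ} (h : 2 / ((k:ℝ) + 2) < c) :
    deriv (betaK k) c = 1 / 2 := by
  have he : betaK k =ᶠ[nhds c] fun x => (1 + x) / 2 :=
    Filter.eventuallyEq_of_mem (Ioi_mem_nhds h) (fun x hx => betaK_right k (le_of_lt hx))
  rw [he.deriv_eq]
  have : HasDerivAt (fun x : ℝ => (1 + x) / 2) (1 / 2) c := by
    simpa using (((hasDerivAt_id c).const_add (1:ℝ)).div_const 2)
  exact this.deriv

/-- The integrand of the Minty pairing. -/
noncomputable def f (c : ℝ) : ℝ :=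
  (betaK k c - (1 + c) / 2) * (1 - c - (betaK k c - c) / deriv (betaK k) c)

noncomputable def p1 (c : ℝ) : ℝ := 9/20 * c - 9/10 * c^2

noncomputable def p2 (c : ℝ) : ℝ :=
  -(9/40) * c^2 + (9/80 + 27/(40*((k:ℝ)+2))) * c
    - (9/(40*((k:ℝ)+2)) + 9/(20*((k:ℝ)+2)^2))

lemma f_left {c : ℝ} (h : c < 1 / ((k:ℝ) + 2)) : f k c = p1 c := by
  rw [f, p1, betaK_left k h, deriv_left k h]; ring

lemma f_mid {c : ℝ} (h1 : 1 / ((k:ℝ) + 2) < c) (h2 : c < 2 / ((k:ℝ) + 2)) :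
    f k c = p2 k c := by
  have hn := (hn0 k).ne'
  rw [f, p2, betaK_mid k h1.le h2, deriv_mid k h1 h2]
  field_simp
  ring

lemma f_right {c : ℝ} (h : 2 / ((k:ℝ) + 2) ≤ c) : f k c = 0 := by
  rw [f, betaK_right k h]; ring

lemma ae_ne (x : ℝ) : ∀ᵐ c : ℝ, c ≠ x := by
  rw [ae_iff]
  simp only [not_not, Set.setOf_eq_eq_singleton]
  exact measure_singleton x

lemma p1_cont : Continuous p1 := by unfold p1; continuity

lemma p2_cont : Continuous (p2 k) := by unfold p2; continuity

noncomputable def F1 (c : ℝ) : ℝ := 9/40 * c^2 - 3/10 * c^3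

lemma hF1 (c : ℝ) : HasDerivAt F1 (p1 c) c := by
  have h := (((hasDerivAt_pow 2 c).const_mul (9/40 : ℝ)).sub
    ((hasDerivAt_pow 3 c).const_mul (3/10 : ℝ)))
  refine (show HasDerivAt F1 _ c from h).congr_deriv ?_
  rw [p1]; push_cast; ring

noncomputable def F2 (c : ℝ) : ℝ :=
  -(3/40) * c^3 + (9/160 + 27/(80*((k:ℝ)+2))) * c^2
    - (9/(40*((k:ℝ)+2)) + 9/(20*((k:ℝ)+2)^2)) * c

lemma hF2 (c : ℝ) : HasDerivAt (F2 k) (p2 k c) c := by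
  have h := ((((hasDerivAt_pow 3 c).const_mul (-(3/40) : ℝ)).add
    ((hasDerivAt_pow 2 c).const_mul ((9/160 + 27/(80*((k:ℝ)+2))) : ℝ))).sub
    ((hasDerivAt_id c).const_mul ((9/(40*((k:ℝ)+2)) + 9/(20*((k:ℝ)+2)^2)) : ℝ)))
  refine (show HasDerivAt (F2 k) _ c from h).congr_deriv ?_
  have hn := (hn0 k).ne'
  rw [p2]; push_cast; field_simp; ring

lemma int1 : ∫ c in (0:ℝ)..(1 / ((k:ℝ) + 2)), f k c
    = F1 (1 / ((k:ℝ) + 2)) - F1 0 := by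
  rw [intervalIntegral.integral_congr_ae (g := p1) ?_]
  · exact intervalIntegral.integral_eq_sub_of_hasDerivAt (fun x _ => hF1 x)
      ((p1_cont).intervalIntegrable _ _)
  · filter_upwards [ae_ne (1 / ((k:ℝ) + 2))] with c hc hmem
    rw [Set.uIoc_of_le (ha0 k).le] at hmem
    exact f_left k (lt_of_le_of_ne hmem.2 hc)

lemma int2 : ∫ c in (1 / ((k:ℝ) + 2))..(2 / ((k:ℝ) + 2)), f k c
    = F2 k (2 / ((k:ℝ) + 2)) - F2 k (1 / ((k:ℝ) + 2)) := by
  rw [intervalIntegral.integral_congr_ae (g := p2 k) ?_]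
  · exact intervalIntegral.integral_eq_sub_of_hasDerivAt (fun x _ => hF2 k x)
      ((p2_cont k).intervalIntegrable _ _)
  · filter_upwards [ae_ne (2 / ((k:ℝ) + 2))] with c hc hmem
    rw [Set.uIoc_of_le (hab k).le] at hmem
    exact f_mid k hmem.1 (lt_of_le_of_ne hmem.2 hc)

lemma int3 : ∫ c in (2 / ((k:ℝ) + 2))..(1:ℝ), f k c = 0 := by
  rw [intervalIntegral.integral_congr (g := fun _ => (0:ℝ)) ?_,
    intervalIntegral.integral_const]
  · simp
  · intro c hc
    rw [Set.uIcc_of_le (hb1 k)] at hc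
    exact f_right k hc.1

lemma ii1 : IntervalIntegrable (f k) volume 0 (1 / ((k:ℝ) + 2)) := by
  apply ((p1_cont).intervalIntegrable 0 (1 / ((k:ℝ) + 2))).congr_ae
  apply (ae_restrict_iff' measurableSet_uIoc).2
  filter_upwards [ae_ne (1 / ((k:ℝ) + 2))] with c hc hmem
  rw [Set.uIoc_of_le (ha0 k).le] at hmem
  exact (f_left k (lt_of_le_of_ne hmem.2 hc)).symm

lemma ii2 : IntervalIntegrable (f k) volume (1 / ((k:ℝ) + 2)) (2 / ((k:ℝ) + 2)) := by
  apply ((p2_cont k).intervalIntegrable _ _).congr_ae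
  apply (ae_restrict_iff' measurableSet_uIoc).2
  filter_upwards [ae_ne (2 / ((k:ℝ) + 2))] with c hc hmem
  rw [Set.uIoc_of_le (hab k).le] at hmem
  exact (f_mid k hmem.1 (lt_of_le_of_ne hmem.2 hc)).symm

lemma ii3 : IntervalIntegrable (f k) volume (2 / ((k:ℝ) + 2)) 1 := by
  apply (_root_.intervalIntegrable_const (c := (0:ℝ))).congr_ae
  apply (ae_restrict_iff' measurableSet_uIoc).2
  filter_upwards with c hmem
  rw [Set.uIoc_of_le (hb1 k)] at hmem
  exact (f_right k hmem.1.le).symm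

lemma total : F1 (1/((k:ℝ)+2)) - F1 0
    + (F2 k (2/((k:ℝ)+2)) - F2 k (1/((k:ℝ)+2))) + 0
    = (27*((k:ℝ)+2) - 42)/(160*((k:ℝ)+2)^3) := by
  have hn := (hn0 k).ne'
  simp only [F1, F2]
  field_simp
  ring

lemma total_pos : (0:ℝ) < (27*((k:ℝ)+2) - 42)/(160*((k:ℝ)+2)^3) := by
  have h2 := hn2 k
  apply div_pos (by nlinarith) (by positivity)

end BKaux

/-- Each `β_k` is continuous, satisfies `β_k 1 = 1`, has `β_k' ≥ 1/5` a.e. on `[0,1]`,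
and has strictly positive Minty pairing against `β*`. -/
theorem stmt4 (k : ℕ) :
    Continuous (betaK k) ∧
    betaK k 1 = 1 ∧
    (∀ᵐ c, c ∈ Set.Icc (0 : ℝ) 1 → 1 / 5 ≤ deriv (betaK k) c) ∧
    0 < mintyPairing (betaK k) := by
  refine ⟨?_, ?_, ?_, ?_⟩
  · -- continuity
    have hinner : Continuous fun c : ℝ =>
        if c < 2 / ((k:ℝ)+2) then (5*(k:ℝ)+4)/(10*((k:ℝ)+2)) + (4/5)*c else (1+c)/2 := by
      apply Continuous.if
      · intro c hc
        rw [show {x : ℝ | x < 2/((k:ℝ)+2)} = Set.Iio (2/((k:ℝ)+2)) from rfl,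
          frontier_Iio, Set.mem_singleton_iff] at hc
        subst hc
        have hn := (BKaux.hn0 k).ne'
        field_simp
        ring
      · continuity
      · continuity
    unfold betaK
    apply Continuous.if
    · intro c hc
      rw [show {x : ℝ | x < 1/((k:ℝ)+2)} = Set.Iio (1/((k:ℝ)+2)) from rfl,
        frontier_Iio, Set.mem_singleton_iff] at hc
      subst hc
      rw [if_pos (BKaux.hab k)]
      have hn := (BKaux.hn0 k).ne'
      field_simp
      ring
    · continuity
    · exact hinner
  · -- betaK k 1 = 1
    have h1 : ¬ (1:ℝ) < 1/((k:ℝ)+2) :=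
      not_lt.2 (le_trans (BKaux.hab k).le (BKaux.hb1 k))
    have h2 : ¬ (1:ℝ) < 2/((k:ℝ)+2) := not_lt.2 (BKaux.hb1 k)
    rw [betaK, if_neg h1, if_neg h2]
    norm_num
  · -- a.e. derivative bound
    filter_upwards [BKaux.ae_ne (1/((k:ℝ)+2)), BKaux.ae_ne (2/((k:ℝ)+2))] with c h1 h2 _
    rcases lt_trichotomy c (1/((k:ℝ)+2)) with h | h | h
    · rw [BKaux.deriv_left k h]
    · exact absurd h h1
    · rcases lt_trichotomy c (2/((k:ℝ)+2)) with h' | h' | h'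
      · rw [BKaux.deriv_mid k h h']; norm_num
      · exact absurd h' h2
      · rw [BKaux.deriv_right k h']; norm_num
  · -- positivity of the Minty pairing
    have hM : mintyPairing (betaK k) = ∫ c in (0:ℝ)..1, BKaux.f k c := rfl
    rw [hM,
      ← intervalIntegral.integral_add_adjacent_intervals
        ((BKaux.ii1 k).trans (BKaux.ii2 k)) (BKaux.ii3 k),
      ← intervalIntegral.integral_add_adjacent_intervals (BKaux.ii1 k) (BKaux.ii2 k),
      BKaux.int1, BKaux.int2, BKaux.int3, BKaux.total]
    exact BKaux.total_pos k
end

section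
/- The Minty variational inequality fails locally at the BNE: for every ε > 0 there exists an admissible strategy β with sup_{c∈[0,1]} |β(c) - β*(c)| < ε, β(1) = 1, β' ≥ 1/10 a.e., and ∫_0^1 (β(c) - β*(c))(1 - c - (β(c)-c)/β'(c)) dc > 0, where β*(c) = (1+c)/2. -/
open MeasureTheory

noncomputable def bb (t c : ℝ) : ℝ :=
  if c ≤ t then 1/2 + c/10
  else if c ≤ t + t^2 then (1+c)/2 + (2/(5*t)) * (c - (t + t^2))
  else (1+c)/2

lemma bb_cont (t : ℝ) (ht : 0 < t) : Continuous (bb t) := by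
  have h1 : Continuous fun c : ℝ => 1/2 + c/10 := by continuity
  have h2 : Continuous fun c : ℝ => (1+c)/2 + (2/(5*t)) * (c - (t + t^2)) := by continuity
  have h3 : Continuous fun c : ℝ => (1+c)/2 := by continuity
  have hinner : Continuous fun c : ℝ =>
      if c ≤ t + t^2 then (1+c)/2 + (2/(5*t)) * (c - (t + t^2)) else (1+c)/2 := by
    apply Continuous.if_le h2 h3 continuous_id continuous_const
    intro x hx; simp only [id] at hx; rw [hx]; ring
  apply Continuous.if_le h1 hinner continuous_id continuous_const
  intro x hx
  simp only [id] at hx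
  rw [hx]
  have : (t:ℝ) ≤ t + t^2 := by nlinarith
  rw [if_pos this]
  field_simp
  ring

lemma bb_deriv1 {t c : ℝ} (hc : c < t) : deriv (bb t) c = 1/10 := by
  have hev : bb t =ᶠ[nhds c] fun x : ℝ => 1/2 + x/10 := by
    filter_upwards [Iio_mem_nhds hc] with x hx
    simp only [Set.mem_Iio] at hx
    simp [bb, le_of_lt hx]
  rw [hev.deriv_eq]
  exact (((hasDerivAt_id c).div_const 10).const_add (1/2 : ℝ)).deriv

lemma bb_deriv2 {t c : ℝ} (hc1 : t < c) (hc2 : c < t + t^2) :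
    deriv (bb t) c = 1/2 + 2/(5*t) := by
  have hev : bb t =ᶠ[nhds c] fun x : ℝ => (1+x)/2 + (2/(5*t)) * (x - (t + t^2)) := by
    filter_upwards [Ioo_mem_nhds hc1 hc2] with x hx
    simp only [Set.mem_Ioo] at hx
    simp [bb, not_le.mpr hx.1, le_of_lt hx.2]
  rw [hev.deriv_eq]
  have h1 : HasDerivAt (fun x : ℝ => (1+x)/2) (1/2) c :=
    ((hasDerivAt_id c).const_add 1).div_const 2
  have h2 : HasDerivAt (fun x : ℝ => (2/(5*t)) * (x - (t + t^2))) (2/(5*t)) c := by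
    simpa using ((hasDerivAt_id c).sub_const (t + t^2)).const_mul (2/(5*t))
  exact (h1.add h2).deriv

lemma bb_deriv3 {t c : ℝ} (ht : 0 ≤ t) (hc : t + t^2 < c) : deriv (bb t) c = 1/2 := by
  have hev : bb t =ᶠ[nhds c] fun x : ℝ => (1+x)/2 := by
    filter_upwards [Ioi_mem_nhds hc] with x hx
    have h1 : ¬ x ≤ t := by simp only [Set.mem_Ioi] at hx; nlinarith
    have h2 : ¬ x ≤ t + t^2 := by simp only [Set.mem_Ioi] at hx; linarith
    simp [bb, h1, h2]
  rw [hev.deriv_eq]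
  exact (((hasDerivAt_id c).const_add 1).div_const 2).deriv

lemma bb_diff {t c : ℝ} (ht : 0 < t) (hc : 0 ≤ c) :
    bb t c - (1+c)/2 ∈ Set.Icc (-(2/5*t)) 0 := by
  have hu : (0:ℝ) < 2/(5*t) := by positivity
  have hut : 2/(5*t) * t^2 = 2/5*t := by field_simp
  unfold bb
  split_ifs with h1 h2
  · constructor <;> nlinarith
  · push_neg at h1
    constructor
    · nlinarith [mul_nonneg hu.le (sub_nonneg.mpr h1.le)]
    · nlinarith [mul_nonpos_of_nonneg_of_nonpos hu.le (sub_nonpos.mpr h2)]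
  · norm_num; nlinarith

lemma bb_ae_deriv {t : ℝ} (ht : 0 < t) :
    ∀ᵐ c : ℝ, c ∈ Set.Icc (0:ℝ) 1 → 1/10 ≤ deriv (bb t) c := by
  have hne_t : ∀ᵐ x : ℝ, x ≠ t := by
    rw [ae_iff]; simpa using measure_singleton (t : ℝ)
  have hne_a : ∀ᵐ x : ℝ, x ≠ t + t^2 := by
    rw [ae_iff]; simpa using measure_singleton (t + t^2 : ℝ)
  filter_upwards [hne_t, hne_a] with c h1 h2 _
  rcases lt_or_gt_of_ne h1 with hlt | hgt
  · rw [bb_deriv1 hlt]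
  · rcases lt_or_gt_of_ne h2 with hlt2 | hgt2
    · rw [bb_deriv2 hgt hlt2]
      have : (0:ℝ) < 2/(5*t) := by positivity
      linarith
    · rw [bb_deriv3 ht.le hgt2]; norm_num

set_option maxHeartbeats 1000000 in
lemma bb_integral_pos {t : ℝ} (ht : 0 < t) (ht4 : t ≤ 1/4) :
    0 < ∫ c in (0:ℝ)..1,
      (bb t c - (1 + c) / 2) * (1 - c - (bb t c - c) / deriv (bb t) c) := by
  set F : ℝ → ℝ := fun c =>
    (bb t c - (1 + c) / 2) * (1 - c - (bb t c - c) / deriv (bb t) c) with hF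
  set g1 : ℝ → ℝ := fun c => (8*c - 16*c^2)/5 with hg1
  set K : ℝ := (2/(5*t))^2/(1/2 + 2/(5*t)) with hK
  set g2 : ℝ → ℝ := fun c => K * ((c - (t+t^2)) * (1 + (t+t^2) - 2*c)) with hg2
  have h5t : (5:ℝ)*t ≠ 0 := by positivity
  have hDne : (1:ℝ)/2 + 2/(5*t) ≠ 0 := by positivity
  have hta : t ≤ t + t^2 := by nlinarith
  have ha1 : t + t^2 ≤ 1 := by nlinarith
  have hne_t : ∀ᵐ x : ℝ, x ≠ t := by
    rw [ae_iff]; simpa using measure_singleton (t : ℝ)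
  have hne_a : ∀ᵐ x : ℝ, x ≠ t + t^2 := by
    rw [ae_iff]; simpa using measure_singleton (t + t^2 : ℝ)
  -- pointwise identities
  have hFg1 : ∀ x, x < t → F x = g1 x := by
    intro x hx
    have hb : bb t x = 1/2 + x/10 := by simp [bb, hx.le]
    rw [hF, hg1]
    simp only [hb, bb_deriv1 hx]
    ring
  have hFg2 : ∀ x, t < x → x < t + t^2 → F x = g2 x := by
    intro x hx1 hx2
    have hb : bb t x = (1+x)/2 + (2/(5*t)) * (x - (t + t^2)) := by
      simp [bb, not_le.mpr hx1, hx2.le]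
    rw [hF, hg2, hK]
    simp only [hb, bb_deriv2 hx1 hx2]
    field_simp
    ring
  have hFg3 : ∀ x, t + t^2 < x → F x = 0 := by
    intro x hx
    have h1 : ¬ x ≤ t := by nlinarith
    have h2 : ¬ x ≤ t + t^2 := not_le.mpr hx
    have hb : bb t x = (1+x)/2 := by simp [bb, h1, h2]
    rw [hF]; simp [hb]
  -- integrability
  have hg1c : Continuous g1 := by rw [hg1]; continuity
  have hg2c : Continuous g2 := by rw [hg2]; continuity
  have hF1 : IntervalIntegrable F volume 0 t := by
    apply (hg1c.intervalIntegrable 0 t).congr_ae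
    have h := hne_t.filter_mono (ae_mono (Measure.restrict_le_self (s := Set.uIoc 0 t)))
    filter_upwards [h, ae_restrict_mem measurableSet_uIoc] with x hxne hxmem
    rw [Set.uIoc_of_le ht.le] at hxmem
    exact (hFg1 x (lt_of_le_of_ne hxmem.2 hxne)).symm
  have hF2 : IntervalIntegrable F volume t (t + t^2) := by
    apply (hg2c.intervalIntegrable t (t+t^2)).congr_ae
    have h := hne_a.filter_mono (ae_mono (Measure.restrict_le_self (s := Set.uIoc t (t+t^2))))
    filter_upwards [h, ae_restrict_mem measurableSet_uIoc] with x hxne hxmem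
    rw [Set.uIoc_of_le hta] at hxmem
    exact (hFg2 x hxmem.1 (lt_of_le_of_ne hxmem.2 hxne)).symm
  have hF3 : IntervalIntegrable F volume (t + t^2) 1 := by
    apply ((continuous_const (y := (0:ℝ))).intervalIntegrable (t+t^2) 1).congr_ae
    filter_upwards [ae_restrict_mem measurableSet_uIoc] with x hxmem
    rw [Set.uIoc_of_le ha1] at hxmem
    exact (hFg3 x hxmem.1).symm
  -- split the integral
  rw [← intervalIntegral.integral_add_adjacent_intervals (hF1.trans hF2) hF3,
      ← intervalIntegral.integral_add_adjacent_intervals hF1 hF2]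
  -- replace by explicit integrands
  have e1 : ∫ x in (0:ℝ)..t, F x = ∫ x in (0:ℝ)..t, g1 x := by
    apply intervalIntegral.integral_congr_ae
    filter_upwards [hne_t] with x hxne hxmem
    rw [Set.uIoc_of_le ht.le] at hxmem
    exact hFg1 x (lt_of_le_of_ne hxmem.2 hxne)
  have e2 : ∫ x in t..(t + t^2), F x = ∫ x in t..(t + t^2), g2 x := by
    apply intervalIntegral.integral_congr_ae
    filter_upwards [hne_a] with x hxne hxmem
    rw [Set.uIoc_of_le hta] at hxmem
    exact hFg2 x hxmem.1 (lt_of_le_of_ne hxmem.2 hxne)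
  have e3 : ∫ x in (t + t^2)..1, F x = 0 := by
    rw [show (0:ℝ) = ∫ x in (t + t^2)..1, (0:ℝ) by simp]
    apply intervalIntegral.integral_congr_ae
    filter_upwards with x hxmem
    rw [Set.uIoc_of_le ha1] at hxmem
    exact hFg3 x hxmem.1
  rw [e1, e2, e3]
  -- compute the two integrals by FTC
  have hI1 : ∫ x in (0:ℝ)..t, g1 x = (4*t^2 - (16/3)*t^3)/5 := by
    have hd : ∀ x ∈ Set.uIcc (0:ℝ) t,
        HasDerivAt (fun c : ℝ => (4*c^2 - (16/3)*c^3)/5) (g1 x) x := by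
      intro x _
      have h := (((hasDerivAt_pow 2 x).const_mul (4:ℝ)).sub
        ((hasDerivAt_pow 3 x).const_mul ((16:ℝ)/3))).div_const 5
      refine h.congr_deriv ?_
      rw [hg1]; push_cast; ring
    rw [intervalIntegral.integral_eq_sub_of_hasDerivAt hd (hg1c.intervalIntegrable 0 t)]
    ring
  have hI2 : ∫ x in t..(t + t^2), g2 x =
      (K * ((1+(t+t^2))*(t+t^2)^2/2 - (t+t^2)*(1+(t+t^2))*(t+t^2) - (2/3)*(t+t^2)^3 + (t+t^2)*(t+t^2)^2))
      - (K * ((1+(t+t^2))*t^2/2 - (t+t^2)*(1+(t+t^2))*t - (2/3)*t^3 + (t+t^2)*t^2)) := by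
    have hd : ∀ x ∈ Set.uIcc t (t + t^2),
        HasDerivAt (fun c : ℝ => K * ((1+(t+t^2))*c^2/2 - (t+t^2)*(1+(t+t^2))*c - (2/3)*c^3 + (t+t^2)*c^2))
          (g2 x) x := by
      intro x _
      have hbase : HasDerivAt (fun c : ℝ => (1+(t+t^2))*c^2/2 - (t+t^2)*(1+(t+t^2))*c - (2/3)*c^3 + (t+t^2)*c^2)
          ((1+(t+t^2))*(2*x)/2 - (t+t^2)*(1+(t+t^2)) - (2/3)*(3*x^2) + (t+t^2)*(2*x)) x := by
        have h1 := ((hasDerivAt_pow 2 x).const_mul (1+(t+t^2) : ℝ)).div_const 2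
        have h2 := (hasDerivAt_id x).const_mul ((t+t^2)*(1+(t+t^2)) : ℝ)
        have h3 := (hasDerivAt_pow 3 x).const_mul ((2:ℝ)/3)
        have h4 := (hasDerivAt_pow 2 x).const_mul ((t+t^2) : ℝ)
        have := ((h1.sub h2).sub h3).add h4
        refine this.congr_deriv ?_
        push_cast; ring
      have := hbase.const_mul K
      refine this.congr_deriv ?_
      rw [hg2]; ring
    rw [intervalIntegral.integral_eq_sub_of_hasDerivAt hd (hg2c.intervalIntegrable _ _)]
  rw [hI1, hI2]
  -- closed form and positivity
  have hclosed : (4*t^2 - (16/3)*t^3)/5 +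
      ((K * ((1+(t+t^2))*(t+t^2)^2/2 - (t+t^2)*(1+(t+t^2))*(t+t^2) - (2/3)*(t+t^2)^3 + (t+t^2)*(t+t^2)^2))
      - (K * ((1+(t+t^2))*t^2/2 - (t+t^2)*(1+(t+t^2))*t - (2/3)*t^3 + (t+t^2)*t^2))) + 0 =
      (48*t^2 - 16*t^3 - 68*t^4 - 4*t^5)/(15*(5*t+4)) := by
    rw [hK]
    have h54 : (5:ℝ)*t + 4 ≠ 0 := by positivity
    field_simp
    ring
  rw [hclosed]
  apply div_pos
  · nlinarith
  · positivity

/-- The Minty variational inequality fails locally at the BNE `β*(c) = (1+c)/2`: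
for every `ε > 0` there is an admissible strategy `β` (continuous, `[0,1]`-valued,
`β 1 = 1`, `β' ≥ 1/10` a.e.) uniformly `ε`-close to `β*` whose Minty pairing with
`β*` is strictly positive. -/
theorem stmt5 :
    ∀ ε > (0 : ℝ), ∃ β : ℝ → ℝ,
      ContinuousOn β (Set.Icc (0 : ℝ) 1) ∧
      (∀ c ∈ Set.Icc (0 : ℝ) 1, β c ∈ Set.Icc (0 : ℝ) 1) ∧
      β 1 = 1 ∧
      (∀ᵐ c, c ∈ Set.Icc (0 : ℝ) 1 → 1 / 10 ≤ deriv β c) ∧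
      (∀ c ∈ Set.Icc (0 : ℝ) 1, |β c - (1 + c) / 2| < ε) ∧
      0 < ∫ c in (0 : ℝ)..1,
        (β c - (1 + c) / 2) * (1 - c - (β c - c) / deriv β c) := by
  intro ε hε
  set t := min ε (1/4) with hts
  have ht : 0 < t := lt_min hε (by norm_num)
  have ht4 : t ≤ 1/4 := min_le_right _ _
  have htε : t ≤ ε := min_le_left _ _
  refine ⟨bb t, (bb_cont t ht).continuousOn, ?_, ?_, bb_ae_deriv ht, ?_, bb_integral_pos ht ht4⟩
  · intro c hc
    have h := bb_diff ht hc.1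
    have h1 := h.1; have h2 := h.2
    constructor
    · nlinarith [hc.1, hc.2]
    · nlinarith [hc.1, hc.2]
  · have h1 : ¬ (1:ℝ) ≤ t := by push_neg; linarith
    have h2 : ¬ (1:ℝ) ≤ t + t^2 := by push_neg; nlinarith
    simp [bb, h1, h2]
  · intro c hc
    have h := bb_diff ht hc.1
    have h1 := h.1; have h2 := h.2
    rw [abs_lt]
    constructor <;> nlinarith
end

section
/- Since the Minty variational inequality fails at the unique Nash equilibrium, the game gradient operator of the symmetric Bertrand duopoly is not monotone: there exist admissible strategies β, β̃ such that ∫_0^1 (β(c)-β̃(c)) · [(1-c-(β(c)-c)/β'(c)) - (1-c-(β̃(c)-c)/β̃'(c))] dc > 0. -/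
open MeasureTheory

/-- Candidate strategy `β`. -/
noncomputable def myβ : ℝ → ℝ := fun c => 1/2 + c/10 + 2/5 * c^2

/-- Equilibrium strategy `β̃`. -/
noncomputable def myβt : ℝ → ℝ := fun c => 1/2 + c/2

lemma myβ_hasDerivAt (c : ℝ) : HasDerivAt myβ (1/10 + 4/5 * c) c := by
  have h := (((hasDerivAt_const c (1/2 : ℝ)).add
      ((hasDerivAt_id c).div_const 10)).add
      ((hasDerivAt_pow 2 c).const_mul (2/5 : ℝ)))
  exact h.congr_deriv (by push_cast; ring)

lemma myβt_hasDerivAt (c : ℝ) : HasDerivAt myβt (1/2) c := by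
  have h := (hasDerivAt_const c (1/2 : ℝ)).add ((hasDerivAt_id c).div_const 2)
  exact h.congr_deriv (by norm_num)

lemma myβ_deriv (c : ℝ) : deriv myβ c = 1/10 + 4/5 * c := (myβ_hasDerivAt c).deriv

lemma myβt_deriv (c : ℝ) : deriv myβt c = 1/2 := (myβt_hasDerivAt c).deriv

/-- The explicit integrand. -/
noncomputable def myg : ℝ → ℝ := fun c =>
  (myβ c - myβt c) *
    ((1 - c - (myβ c - c) / deriv myβ c) - (1 - c - (myβt c - c) / deriv myβt c))

lemma myg_eq (c : ℝ) (hc : c ∈ Set.uIcc (0:ℝ) 1) :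
    myg c = (8/5) * (c * (1-c)^2 * (1-3*c)) / (1 + 8*c) := by
  rw [Set.uIcc_of_le (by norm_num : (0:ℝ) ≤ 1)] at hc
  have h1 : (0:ℝ) < 1 + 8*c := by nlinarith [hc.1]
  simp only [myg, myβ, myβt, myβ_deriv, myβt_deriv]
  rw [show (1:ℝ)/10 + 4/5*c = (1+8*c)/10 from by ring, div_div_eq_mul_div]
  have h1' : (1 + c*8) ≠ 0 := by linarith
  field_simp
  ring

/-- Antiderivative. -/
noncomputable def myF : ℝ → ℝ := fun c =>
  (8/5) * (-3/32 * c^4 + 59/192 * c^3 - 379/1024 * c^2 + 891/4096 * c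
    - 891/32768 * Real.log (1 + 8*c))

lemma myF_hasDerivAt (c : ℝ) (hc : c ∈ Set.uIcc (0:ℝ) 1) :
    HasDerivAt myF (myg c) c := by
  rw [Set.uIcc_of_le (by norm_num : (0:ℝ) ≤ 1)] at hc
  have h1 : (0:ℝ) < 1 + 8*c := by nlinarith [hc.1]
  have hlin : HasDerivAt (fun c : ℝ => 1 + 8*c) 8 c := by
    have := ((hasDerivAt_id c).const_mul (8:ℝ)).const_add (1:ℝ)
    simpa using this
  have hlog : HasDerivAt (fun c : ℝ => Real.log (1 + 8*c)) (8 / (1 + 8*c)) c :=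
    hlin.log (ne_of_gt h1)
  have hpoly : HasDerivAt
      (fun c : ℝ => -3/32 * c^4 + 59/192 * c^3 - 379/1024 * c^2 + 891/4096 * c)
      (-3/32 * (4*c^3) + 59/192 * (3*c^2) - 379/1024 * (2*c) + 891/4096) c := by
    have h4 := (hasDerivAt_pow 4 c).const_mul (-3/32 : ℝ)
    have h3 := (hasDerivAt_pow 3 c).const_mul (59/192 : ℝ)
    have h2 := (hasDerivAt_pow 2 c).const_mul (379/1024 : ℝ)
    have h1' := (hasDerivAt_id c).const_mul (891/4096 : ℝ)
    have := ((h4.add h3).sub h2).add h1'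
    exact this.congr_deriv (by push_cast; ring)
  have hF : HasDerivAt myF
      ((8/5) * ((-3/32 * (4*c^3) + 59/192 * (3*c^2) - 379/1024 * (2*c) + 891/4096)
        - 891/32768 * (8 / (1 + 8*c)))) c :=
    (hpoly.sub (hlog.const_mul (891/32768 : ℝ))).const_mul (8/5 : ℝ)
  convert hF using 1
  rw [myg_eq c (by rw [Set.uIcc_of_le (by norm_num : (0:ℝ) ≤ 1)]; exact hc)]
  field_simp
  ring

lemma log_nine_lt : Real.log 9 < 5992/2673 := by
  have h9 : (9:ℝ) = 2^3 * (9/8) := by norm_num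
  have hlog : Real.log 9 = 3 * Real.log 2 + Real.log (9/8) := by
    rw [h9, Real.log_mul (by norm_num) (by norm_num), Real.log_pow]
    push_cast; ring_nf
  have h2 : Real.log 2 < 0.6931471808 := Real.log_two_lt_d9
  have h98 : Real.log (9/8) < 9/8 - 1 :=
    Real.log_lt_sub_one_of_pos (by norm_num) (by norm_num)
  rw [hlog]
  nlinarith

/-- The game gradient operator of the symmetric Bertrand duopoly with uniform
costs is not monotone: there exist admissible strategies `β`, `β̃` (continuous,
`[0,1]`-valued, equal to `1` at `1`, with derivative bounded below by some `δ > 0`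
almost everywhere) such that
`∫_0^1 (β - β̃)·[(1 - c - (β-c)/β') - (1 - c - (β̃-c)/β̃')] dc > 0`. -/
theorem stmt6 :
    ∃ δ > (0 : ℝ), ∃ β βt : ℝ → ℝ,
      (ContinuousOn β (Set.Icc (0 : ℝ) 1) ∧
        (∀ c ∈ Set.Icc (0 : ℝ) 1, β c ∈ Set.Icc (0 : ℝ) 1) ∧ β 1 = 1 ∧
        (∀ᵐ c, c ∈ Set.Icc (0 : ℝ) 1 → δ ≤ deriv β c)) ∧
      (ContinuousOn βt (Set.Icc (0 : ℝ) 1) ∧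
        (∀ c ∈ Set.Icc (0 : ℝ) 1, βt c ∈ Set.Icc (0 : ℝ) 1) ∧ βt 1 = 1 ∧
        (∀ᵐ c, c ∈ Set.Icc (0 : ℝ) 1 → δ ≤ deriv βt c)) ∧
      0 < ∫ c in (0 : ℝ)..1, (β c - βt c) *
        ((1 - c - (β c - c) / deriv β c) - (1 - c - (βt c - c) / deriv βt c)) := by
  refine ⟨1/10, by norm_num, myβ, myβt, ⟨?_, ?_, ?_, ?_⟩, ⟨?_, ?_, ?_, ?_⟩, ?_⟩
  · exact (Continuous.continuousOn (by unfold myβ; continuity))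
  · intro c hc
    constructor
    · simp only [myβ]; nlinarith [hc.1, hc.2]
    · simp only [myβ]; nlinarith [hc.1, hc.2]
  · simp [myβ]; norm_num
  · filter_upwards with c hc
    rw [myβ_deriv]; nlinarith [hc.1]
  · exact (Continuous.continuousOn (by unfold myβt; continuity))
  · intro c hc
    constructor
    · simp only [myβt]; nlinarith [hc.1]
    · simp only [myβt]; nlinarith [hc.2]
  · simp [myβt]; norm_num
  · filter_upwards with c hc
    rw [myβt_deriv]; norm_num
  · have hint : IntervalIntegrable myg volume 0 1 := by
      apply ContinuousOn.intervalIntegrable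
      have : ∀ c ∈ Set.uIcc (0:ℝ) 1,
          myg c = (8/5) * (c * (1-c)^2 * (1-3*c)) / (1 + 8*c) := myg_eq
      refine ContinuousOn.congr ?_ this
      apply ContinuousOn.div
      · exact (Continuous.continuousOn (by continuity))
      · exact (Continuous.continuousOn (by continuity))
      · intro c hc
        rw [Set.uIcc_of_le (by norm_num : (0:ℝ) ≤ 1)] at hc
        nlinarith [hc.1]
    have heq : (∫ c in (0:ℝ)..1, (myβ c - myβt c) *
        ((1 - c - (myβ c - c) / deriv myβ c) - (1 - c - (myβt c - c) / deriv myβt c)))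
        = ∫ c in (0:ℝ)..1, myg c := by
      rfl
    rw [heq, intervalIntegral.integral_eq_sub_of_hasDerivAt
      (fun c hc => myF_hasDerivAt c hc) hint]
    have h0 : myF 0 = 0 := by simp [myF]
    have h1 : myF 1 = (8/5) * (749/12288 - 891/32768 * Real.log 9) := by
      simp only [myF]
      norm_num
    rw [h0, h1]
    have := log_nine_lt
    nlinarith [this]
end

section
/- Let δ ∈ (0, 1/2], B = {x ∈ ℝ² : x₁ ≥ δ, x₂ ≥ δ, x₁ + x₂ ≤ 2}, L(x) = 26(x₁-1/2)² + 10(x₂-1/2)², and v the Bertrand game gradient v₁(x) = -7/48 - 3x₂/(48x₁) + 5/(48x₁), v₂(x) = -1/3 - x₂/(8x₁) + 3/(16x₁) + 1/(24x₂). Then there exists w > 0 such that for all x ∈ B, ⟨∇L(x), v(x)⟩ ≤ -w·‖x - (1/2,1/2)‖². -/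
/-- Strict Lyapunov decrease: for `δ ∈ (0,1/2]` there is `w > 0` such that on the
feasible set `B = {x : x₁ ≥ δ, x₂ ≥ δ, x₁ + x₂ ≤ 2}`,
`⟨∇L(x), v(x)⟩ ≤ -w‖x - (1/2,1/2)‖²` for `L(x) = 26(x₁-1/2)² + 10(x₂-1/2)²` and the
Bertrand game gradient `v`. -/
theorem stmt13 (δ : ℝ) (hδ0 : 0 < δ) (hδ : δ ≤ 1 / 2) :
    ∃ w > (0 : ℝ), ∀ x₁ x₂ : ℝ, δ ≤ x₁ → δ ≤ x₂ → x₁ + x₂ ≤ 2 →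
      (52 * (x₁ - 1 / 2)) * (-7 / 48 - 3 * x₂ / (48 * x₁) + 5 / (48 * x₁)) +
        (20 * (x₂ - 1 / 2)) * (-1 / 3 - x₂ / (8 * x₁) + 3 / (16 * x₁) + 1 / (24 * x₂)) ≤
      -w * ((x₁ - 1 / 2) ^ 2 + (x₂ - 1 / 2) ^ 2) := by
  refine ⟨1/10, by norm_num, ?_⟩
  intro x₁ x₂ h1 h2 h3
  have hx1 : (0:ℝ) < x₁ := hδ0.trans_le h1
  have hx2 : (0:ℝ) < x₂ := hδ0.trans_le h2
  have hc : (0:ℝ) ≤ 2 - x₁ - x₂ := by linarith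
  have hprod : (0:ℝ) < x₁ * x₂ := mul_pos hx1 hx2
  have key : (-55/12)*x₂ + (53/8)*x₂^2 - (5/2)*x₂^3 - (5/12)*x₁ + (107/8)*x₁*x₂
      - (119/12)*x₁*x₂^2 - (91/12)*x₁^2*x₂
      ≤ (-(1/10) * ((x₁ - 1 / 2) ^ 2 + (x₂ - 1 / 2) ^ 2)) * (x₁ * x₂) := by
    nlinarith [mul_nonneg hx1.le (sq_nonneg (x₂ - 1/2)),
      mul_nonneg hx1.le (sq_nonneg (x₁ + 4*x₂ - 5/2)),
      mul_nonneg hx2.le (sq_nonneg (2*x₁ + x₂ - 3/2)),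
      mul_nonneg hx2.le (sq_nonneg (3*x₁ + 2*x₂ - 5/2)),
      mul_nonneg hc (sq_nonneg (x₁ - x₂)),
      sq_nonneg (x₁*(x₁ - 1/2)),
      mul_nonneg (sq_nonneg x₁) (sq_nonneg (x₂ - 1/2)),
      mul_nonneg (sq_nonneg x₁) (sq_nonneg (x₁ - x₂)),
      mul_nonneg (mul_nonneg hx1.le hc) (sq_nonneg (x₁ - 1/2)),
      mul_nonneg (mul_nonneg hx1.le hc) (sq_nonneg (x₂ - 1/2))]
  have hE : ((52 * (x₁ - 1 / 2)) * (-7 / 48 - 3 * x₂ / (48 * x₁) + 5 / (48 * x₁)) +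
        (20 * (x₂ - 1 / 2)) * (-1 / 3 - x₂ / (8 * x₁) + 3 / (16 * x₁) + 1 / (24 * x₂))) * (x₁ * x₂)
      = (-55/12)*x₂ + (53/8)*x₂^2 - (5/2)*x₂^3 - (5/12)*x₁ + (107/8)*x₁*x₂
      - (119/12)*x₁*x₂^2 - (91/12)*x₁^2*x₂ := by
    field_simp
    ring
  exact le_of_mul_le_mul_right (by rw [hE]; linarith [key]) hprod
end

section
/- Suppose β is absolutely continuous on [0,1] with β' ≥ δ > 0 a.e. and 0 ≤ β ≤ 1, and let d : [0,1] → ℝ be bounded. Then for the two-player game with uniform costs, the Gâteaux derivative of the expected utility U(β,β̃)[d] at a symmetric profile (β,β) equals ∫_0^1 d(c)·𝟙{β(c) > β(0)}·(1 - c - (β(c)-c)/β'(c)) dc, and this defines a bounded linear functional of d with operator norm at most 1 + 2/δ (with respect to the sup norm on d). -/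
open MeasureTheory Filter Set


section aux
variable (δ : ℝ) (hδ : 0 < δ) (β : ℝ → ℝ)

lemma grow (hint : IntervalIntegrable (deriv β) volume 0 1)
    (hFTC : ∀ a ∈ Set.Icc (0 : ℝ) 1, ∀ b ∈ Set.Icc (0 : ℝ) 1,
      β b - β a = ∫ t in a..b, deriv β t)
    (hd' : ∀ᵐ t, t ∈ Set.Icc (0 : ℝ) 1 → δ ≤ deriv β t) :
    ∀ a ∈ Set.Icc (0:ℝ) 1, ∀ b ∈ Set.Icc (0:ℝ) 1, a ≤ b →
      δ * (b - a) ≤ β b - β a := by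
  intro a ha b hb hab
  rw [hFTC a ha b hb]
  have h1 : ∀ᵐ t ∂(volume.restrict (Set.Icc a b)), (fun _ => δ) t ≤ deriv β t := by
    have h2 : ∀ᵐ t ∂(volume.restrict (Set.Icc a b)), t ∈ Set.Icc a b :=
      ae_restrict_mem measurableSet_Icc
    filter_upwards [h2, ae_restrict_of_ae hd'] with t ht hd
    exact hd (Set.Icc_subset_Icc ha.1 hb.2 ht)
  have := intervalIntegral.integral_mono_ae_restrict hab
    intervalIntegrable_const
    (hint.mono_set (Set.uIcc_subset_uIcc (by simp [Set.mem_uIcc, ha.1, ha.2])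
      (by simp [Set.mem_uIcc, hb.1, hb.2]))) h1
  simpa [mul_comm] using this

lemma smon (hδ : 0 < δ) (hint : IntervalIntegrable (deriv β) volume 0 1)
    (hFTC : ∀ a ∈ Set.Icc (0 : ℝ) 1, ∀ b ∈ Set.Icc (0 : ℝ) 1,
      β b - β a = ∫ t in a..b, deriv β t)
    (hd' : ∀ᵐ t, t ∈ Set.Icc (0 : ℝ) 1 → δ ≤ deriv β t) :
    StrictMonoOn β (Set.Icc (0:ℝ) 1) := by
  intro a ha b hb hab
  have := grow δ β hint hFTC hd' a ha b hb hab.le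
  nlinarith

end aux

noncomputable def Gf (β : ℝ → ℝ) (y : ℝ) : ℝ :=
  (volume {z : ℝ | z ∈ Set.Icc (0:ℝ) 1 ∧ y < β z}).toReal

section G
variable {δ : ℝ} {β : ℝ → ℝ}

lemma vol_lt_top (y : ℝ) : volume {z : ℝ | z ∈ Set.Icc (0:ℝ) 1 ∧ y < β z} < ⊤ :=
  lt_of_le_of_lt (measure_mono (fun z hz => hz.1))
    (by rw [Real.volume_Icc]; norm_num)

lemma G_nonneg (y : ℝ) : 0 ≤ Gf β y := ENNReal.toReal_nonneg

lemma G_le_one (y : ℝ) : Gf β y ≤ 1 := by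
  have h : volume {z : ℝ | z ∈ Set.Icc (0:ℝ) 1 ∧ y < β z} ≤ volume (Set.Icc (0:ℝ) 1) :=
    measure_mono (fun z hz => hz.1)
  have := ENNReal.toReal_mono (by simp [Real.volume_Icc]) h
  simpa [Gf, Real.volume_Icc] using this

lemma G_anti {y y' : ℝ} (h : y ≤ y') : Gf β y' ≤ Gf β y := by
  apply ENNReal.toReal_mono (vol_lt_top y).ne
  exact measure_mono (fun z hz => ⟨hz.1, lt_of_le_of_lt h hz.2⟩)

lemma G_lip (hδ : 0 < δ)
    (hgrow : ∀ a ∈ Set.Icc (0:ℝ) 1, ∀ b ∈ Set.Icc (0:ℝ) 1, a ≤ b →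
      δ * (b - a) ≤ β b - β a)
    (y y' : ℝ) : |Gf β y - Gf β y'| ≤ 2/δ * |y - y'| := by
  wlog h : y ≤ y' generalizing y y'
  · rw [abs_sub_comm, abs_sub_comm y y']; exact this y' y (le_of_not_ge h)
  set A := {z : ℝ | z ∈ Set.Icc (0:ℝ) 1 ∧ y < β z} with hAdef
  set B := {z : ℝ | z ∈ Set.Icc (0:ℝ) 1 ∧ y' < β z} with hBdef
  have hBA : B ⊆ A := fun z hz => ⟨hz.1, lt_of_le_of_lt h hz.2⟩
  set L := (y' - y)/δ with hL
  have hLnn : 0 ≤ L := div_nonneg (by linarith) hδ.le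
  have hGm : Gf β y' ≤ Gf β y := G_anti h
  have habs : |y - y'| = y' - y := by rw [abs_sub_comm]; exact abs_of_nonneg (by linarith)
  rw [abs_of_nonneg (by linarith), habs]
  have key : Gf β y ≤ Gf β y' + 2 * L := by
    rcases Set.eq_empty_or_nonempty (A \ B) with hAB | ⟨z0, hz0⟩
    · have hAeqB : A = B := Set.Subset.antisymm
        (fun z hz => by
          by_contra hzB
          exact absurd (show z ∈ (∅ : Set ℝ) by have hm : z ∈ A \ B := ⟨hz, hzB⟩; rw [hAB] at hm; exact hm) (Set.notMem_empty z)) hBA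
      rw [Gf, Gf, ← hAdef, ← hBdef, hAeqB]; linarith
    · have hsub : A \ B ⊆ Set.Icc (z0 - L) (z0 + L) := by
        rintro z ⟨⟨hzI, hzy⟩, hzB⟩
        obtain ⟨⟨hz0I, hz0y⟩, hz0B⟩ := hz0
        have hzle : β z ≤ y' := by
          by_contra hc; exact hzB ⟨hzI, lt_of_not_ge hc⟩
        have hz0le : β z0 ≤ y' := by
          by_contra hc; exact hz0B ⟨hz0I, lt_of_not_ge hc⟩
        constructor
        · rcases le_total z0 z with hzz | hzz
          · linarith
          · have h2 := hgrow z hzI z0 hz0I hzz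
            have h3 : z0 - z ≤ L := by rw [hL, le_div_iff₀ hδ]; nlinarith
            linarith
        · rcases le_total z z0 with hzz | hzz
          · linarith
          · have h2 := hgrow z0 hz0I z hzI hzz
            have h3 : z - z0 ≤ L := by rw [hL, le_div_iff₀ hδ]; nlinarith
            linarith
      have hmeas : volume A ≤ volume B + ENNReal.ofReal (2 * L) := by
        calc volume A ≤ volume (B ∪ (A \ B)) :=
              measure_mono (fun z hz => by
                by_cases hzB : z ∈ B
                · exact Or.inl hzB
                · exact Or.inr ⟨hz, hzB⟩)
          _ ≤ volume B + volume (A \ B) := measure_union_le _ _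
          _ ≤ volume B + ENNReal.ofReal (2 * L) := by
              gcongr
              calc volume (A \ B) ≤ volume (Set.Icc (z0 - L) (z0 + L)) := measure_mono hsub
                _ = ENNReal.ofReal (2 * L) := by
                    rw [Real.volume_Icc]; congr 1; ring
      have hB := (vol_lt_top (β := β) y').ne
      have := ENNReal.toReal_mono
        (ENNReal.add_ne_top.mpr ⟨hB, ENNReal.ofReal_ne_top⟩) hmeas
      rw [ENNReal.toReal_add hB ENNReal.ofReal_ne_top,
        ENNReal.toReal_ofReal (by positivity)] at this
      exact this
  rw [hL] at key
  have he : 2 * ((y' - y)/δ) = 2/δ * (y' - y) := by ring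
  linarith [key]

end G

section psi
variable {δ : ℝ} {β : ℝ → ℝ}

lemma G_val (hsm : StrictMonoOn β (Set.Icc (0:ℝ) 1)) {c : ℝ} (hc : c ∈ Set.Icc (0:ℝ) 1) :
    Gf β (β c) = 1 - c := by
  have hset : {z : ℝ | z ∈ Set.Icc (0:ℝ) 1 ∧ β c < β z} = Set.Ioc c 1 := by
    ext z
    simp only [Set.mem_setOf_eq, Set.mem_Ioc, Set.mem_Icc]
    constructor
    · rintro ⟨⟨hz0, hz1⟩, hβ⟩
      refine ⟨?_, hz1⟩
      by_contra hzc
      exact absurd (hsm.monotoneOn ⟨hz0, hz1⟩ hc (le_of_not_gt hzc)) (not_le.mpr hβ)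
    · rintro ⟨hcz, hz1⟩
      have hz0 : 0 ≤ z := le_trans hc.1 hcz.le
      exact ⟨⟨hz0, hz1⟩, hsm hc ⟨hz0, hz1⟩ hcz⟩
  rw [Gf, hset, Real.volume_Ioc, ENNReal.toReal_ofReal (by linarith [hc.2])]

/-- the inverse of β on [0,1] -/
noncomputable def psi (β : ℝ → ℝ) (y : ℝ) : ℝ :=
  sSup {z : ℝ | z ∈ Set.Icc (0:ℝ) 1 ∧ β z ≤ y}

lemma psi_eq (hcont : ContinuousOn β (Set.Icc (0:ℝ) 1))
    (hsm : StrictMonoOn β (Set.Icc (0:ℝ) 1)) {y : ℝ}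
    (hy : y ∈ Set.Icc (β 0) (β 1)) :
    psi β y ∈ Set.Icc (0:ℝ) 1 ∧ β (psi β y) = y := by
  obtain ⟨z, hz, hβz⟩ : ∃ z ∈ Set.Icc (0:ℝ) 1, β z = y := by
    have := intermediate_value_Icc (by norm_num : (0:ℝ) ≤ 1) hcont
    obtain ⟨z, hz, hβz⟩ := this hy
    exact ⟨z, hz, hβz⟩
  have hpsi : psi β y = z := by
    apply le_antisymm
    · have hne : {w : ℝ | w ∈ Set.Icc (0:ℝ) 1 ∧ β w ≤ y}.Nonempty :=
        ⟨z, hz, le_of_eq hβz⟩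
      refine csSup_le hne ?_
      rintro w ⟨hwI, hwy⟩
      by_contra hwz
      have := hsm hz hwI (lt_of_not_ge hwz)
      rw [hβz] at this; linarith
    · exact le_csSup ⟨1, fun w hw => hw.1.2⟩ ⟨hz, le_of_eq hβz⟩
  rw [hpsi]; exact ⟨hz, hβz⟩

lemma G_eq_psi (hcont : ContinuousOn β (Set.Icc (0:ℝ) 1))
    (hsm : StrictMonoOn β (Set.Icc (0:ℝ) 1)) {y : ℝ}
    (hy : y ∈ Set.Icc (β 0) (β 1)) :
    Gf β y = 1 - psi β y := by
  obtain ⟨hpI, hpe⟩ := psi_eq hcont hsm hy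
  calc Gf β y = Gf β (β (psi β y)) := by rw [hpe]
    _ = 1 - psi β y := G_val hsm hpI

lemma psi_hasDeriv (hδ : 0 < δ) (hcont : ContinuousOn β (Set.Icc (0:ℝ) 1))
    (hsm : StrictMonoOn β (Set.Icc (0:ℝ) 1))
    (hgrow : ∀ a ∈ Set.Icc (0:ℝ) 1, ∀ b ∈ Set.Icc (0:ℝ) 1, a ≤ b →
      δ * (b - a) ≤ β b - β a)
    {c b : ℝ} (hc : c ∈ Set.Ioo (0:ℝ) 1) (hb : HasDerivAt β b c) (hbδ : δ ≤ b) :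
    HasDerivAt (Gf β) (-b⁻¹) (β c) := by
  have h01 : (0:ℝ) ∈ Set.Icc (0:ℝ) 1 := by norm_num
  have h11 : (1:ℝ) ∈ Set.Icc (0:ℝ) 1 := by norm_num
  have hcI : c ∈ Set.Icc (0:ℝ) 1 := ⟨hc.1.le, hc.2.le⟩
  have hlt0 : β 0 < β c := hsm h01 hcI hc.1
  have hlt1 : β c < β 1 := hsm hcI h11 hc.2
  have hopen : Set.Ioo (β 0) (β 1) ∈ nhds (β c) :=
    Ioo_mem_nhds hlt0 hlt1
  -- ψ(β c) = c
  have hψc : psi β (β c) = c := by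
    obtain ⟨hpI, hpe⟩ := psi_eq hcont hsm ⟨hlt0.le, hlt1.le⟩
    exact hsm.injOn hpI hcI hpe
  -- ψ is continuous at β c : since ψ = 1 - G on a nbhd and G is Lipschitz
  have hGlip : LipschitzWith (Real.toNNReal (2/δ)) (Gf β) := by
    apply LipschitzWith.of_dist_le_mul
    intro x y
    rw [Real.dist_eq, Real.dist_eq, Real.coe_toNNReal _ (by positivity)]
    exact G_lip hδ hgrow x y
  have hGcont : Continuous (Gf β) := hGlip.continuous
  have hψeq : ∀ᶠ y in nhds (β c), psi β y = 1 - Gf β y := by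
    filter_upwards [hopen] with y hy
    have := G_eq_psi hcont hsm (Set.mem_Icc_of_Ioo hy)
    linarith
  have hψcont : ContinuousAt (psi β) (β c) := by
    apply ContinuousAt.congr (f := fun y => 1 - Gf β y)
    · exact (continuous_const.sub hGcont).continuousAt
    · exact hψeq.mono fun y hy => hy.symm
  -- local left inverse
  have hfg : ∀ᶠ y in nhds (β c), β (psi β y) = y := by
    filter_upwards [hopen] with y hy
    exact (psi_eq hcont hsm (Set.mem_Icc_of_Ioo hy)).2
  have hψd : HasDerivAt (psi β) b⁻¹ (β c) := by
    apply HasDerivAt.of_local_left_inverse hψcont (by rw [hψc]; exact hb)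
      (by exact (lt_of_lt_of_le hδ hbδ).ne') hfg
  have : HasDerivAt (fun y => 1 - psi β y) (-b⁻¹) (β c) := by
    have h := (hasDerivAt_const (β c) (1:ℝ)).sub hψd
    simp only [zero_sub] at h
    exact h
  apply this.congr_of_eventuallyEq
  filter_upwards [hψeq] with y hy
  rw [hy]; ring

end psi


/-- Expected utility of player 1 playing `β` against `β̃` in the two-player Bertrand
game with uniform costs and all-or-nothing demand:
`U(β,β̃) = ∫_0^1 (β(c)-c)·vol{z ∈ [0,1] : β̃(z) > β(c)} dc`. -/
noncomputable def EU (β βt : ℝ → ℝ) : ℝ :=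
  ∫ c in (0 : ℝ)..1, (β c - c) *
    (volume {z : ℝ | z ∈ Set.Icc (0 : ℝ) 1 ∧ β c < βt z}).toReal

/-- The claimed Gâteaux derivative of `U` at the symmetric profile `(β,β)` in
direction `d`. -/
noncomputable def DU (β d : ℝ → ℝ) : ℝ :=
  ∫ c in (0 : ℝ)..1, d c * (if β 0 < β c then (1 : ℝ) else 0) *
    (1 - c - (β c - c) / deriv β c)

noncomputable def Ffun (β d : ℝ → ℝ) (ε c : ℝ) : ℝ :=
  (β c + ε * d c - c) * Gf β (β c + ε * d c)


/-- For an admissible `β` (absolutely continuous, `[0,1]`-valued, `β' ≥ δ > 0` a.e.)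
and bounded measurable `d`, the Gâteaux derivative of the expected utility at the
symmetric profile `(β,β)` in direction `d` equals
`∫_0^1 d(c)·𝟙{β(c) > β(0)}·(1 - c - (β(c)-c)/β'(c)) dc`, and this is a bounded
linear functional of `d` with norm at most `1 + 2/δ` w.r.t. the sup norm. -/
theorem stmt19 (δ : ℝ) (hδ : 0 < δ) (β : ℝ → ℝ)
    (hcont : ContinuousOn β (Set.Icc (0 : ℝ) 1))
    (hrange : ∀ c ∈ Set.Icc (0 : ℝ) 1, β c ∈ Set.Icc (0 : ℝ) 1)
    (hint : IntervalIntegrable (deriv β) volume 0 1)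
    (hFTC : ∀ a ∈ Set.Icc (0 : ℝ) 1, ∀ b ∈ Set.Icc (0 : ℝ) 1,
      β b - β a = ∫ t in a..b, deriv β t)
    (hd' : ∀ᵐ t, t ∈ Set.Icc (0 : ℝ) 1 → δ ≤ deriv β t)
    (d : ℝ → ℝ) (hdm : Measurable d) (Md : ℝ) (hMd : ∀ c, |d c| ≤ Md) :
    Tendsto (fun ε : ℝ =>
        ε⁻¹ * (EU (fun c => β c + ε * d c) β - EU β β)) (nhdsWithin 0 {0}ᶜ)
      (nhds (DU β d)) ∧
    |DU β d| ≤ (1 + 2 / δ) * Md ∧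
    (∀ d₁ d₂ : ℝ → ℝ, Measurable d₁ → Measurable d₂ → (∃ M, ∀ c, |d₁ c| ≤ M) →
      (∃ M, ∀ c, |d₂ c| ≤ M) → DU β (d₁ + d₂) = DU β d₁ + DU β d₂) ∧
    (∀ (a : ℝ) (d₁ : ℝ → ℝ), Measurable d₁ → (∃ M, ∀ c, |d₁ c| ≤ M) →
      DU β (a • d₁) = a * DU β d₁) := by
  have hgrow := grow δ β hint hFTC hd'
  have hsm := smon δ β hδ hint hFTC hd'
  have hMd0 : 0 ≤ Md := le_trans (abs_nonneg _) (hMd 0)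
  have h01 : (0:ℝ) ∈ Set.Icc (0:ℝ) 1 := by norm_num
  have h11 : (1:ℝ) ∈ Set.Icc (0:ℝ) 1 := by norm_num
  -- the G function is Lipschitz
  have hGlip := G_lip (β := β) hδ hgrow
  have hGcont : Continuous (Gf β) := by
    have : LipschitzWith (Real.toNNReal (2/δ)) (Gf β) := by
      apply LipschitzWith.of_dist_le_mul
      intro x y
      rw [Real.dist_eq, Real.dist_eq, Real.coe_toNNReal _ (by positivity)]
      exact hGlip x y
    exact this.continuous
  -- measurability of β on the restricted measure
  have hβae : AEMeasurable β (volume.restrict (Set.Ioc (0:ℝ) 1)) :=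
    (hcont.aemeasurable measurableSet_Icc).mono_measure
      (Measure.restrict_mono Set.Ioc_subset_Icc_self le_rfl)
  -- the integrand family
  -- generic bounded measurable direction facts (used for d, d₁, d₂)
  have hDUint : ∀ (e : ℝ → ℝ), Measurable e → ∀ M : ℝ, (∀ c, |e c| ≤ M) →
      IntegrableOn (fun c => e c * (if β 0 < β c then (1:ℝ) else 0) *
        (1 - c - (β c - c) / deriv β c)) (Set.Ioc (0:ℝ) 1) volume := by
    intro e hem M hM
    have hM0 : 0 ≤ M := le_trans (abs_nonneg _) (hM 0)
    have hmeas : AEStronglyMeasurable (fun c => e c * (if β 0 < β c then (1:ℝ) else 0) *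
        (1 - c - (β c - c) / deriv β c)) (volume.restrict (Set.Ioc (0:ℝ) 1)) := by
      have hind : AEMeasurable (fun c => if β 0 < β c then (1:ℝ) else 0)
          (volume.restrict (Set.Ioc (0:ℝ) 1)) := by
        have houter : Measurable (fun y : ℝ => if β 0 < y then (1:ℝ) else 0) := by
          apply Measurable.ite (measurableSet_Ioi) measurable_const measurable_const
        exact houter.comp_aemeasurable hβae
      have h3 : AEMeasurable (fun c => 1 - c - (β c - c) / deriv β c)
          (volume.restrict (Set.Ioc (0:ℝ) 1)) := by
        apply AEMeasurable.sub
        · exact (measurable_const.sub measurable_id).aemeasurable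
        · exact (hβae.sub measurable_id.aemeasurable).div
            (measurable_deriv β).aemeasurable
      exact ((hem.aemeasurable.mul hind).mul h3).aestronglyMeasurable
    apply Integrable.mono' (integrable_const (M * (1 + 2/δ))) hmeas
    have hmem : ∀ᵐ c ∂(volume.restrict (Set.Ioc (0:ℝ) 1)), c ∈ Set.Ioc (0:ℝ) 1 :=
      ae_restrict_mem measurableSet_Ioc
    filter_upwards [hmem, ae_restrict_of_ae hd'] with c hc hdc
    have hcI : c ∈ Set.Icc (0:ℝ) 1 := Set.Ioc_subset_Icc_self hc
    have hb : δ ≤ deriv β c := hdc hcI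
    have hbpos : 0 < deriv β c := lt_of_lt_of_le hδ hb
    have hβc := hrange c hcI
    have habs1 : |β c - c| ≤ 1 := by
      rw [abs_le]; constructor <;> [linarith [hβc.1, hcI.2]; linarith [hβc.2, hcI.1]]
    have hdiv : |(β c - c) / deriv β c| ≤ 1/δ := by
      rw [abs_div, abs_of_pos hbpos]
      exact div_le_div₀ (by positivity) habs1 hδ hb
    have hX : |1 - c - (β c - c) / deriv β c| ≤ 1 + 2/δ := by
      have h1c : |1 - c| ≤ 1 := by rw [abs_le]; constructor <;> linarith [hcI.1, hcI.2]
      calc |1 - c - (β c - c) / deriv β c| ≤ |1 - c| + |(β c - c) / deriv β c| :=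
            abs_sub _ _
        _ ≤ 1 + 1/δ := add_le_add h1c hdiv
        _ ≤ 1 + 2/δ := by gcongr <;> norm_num
    have hind1 : |(if β 0 < β c then (1:ℝ) else 0)| ≤ 1 := by
      split <;> simp
    calc ‖e c * (if β 0 < β c then (1:ℝ) else 0) * (1 - c - (β c - c) / deriv β c)‖
        = |e c| * |(if β 0 < β c then (1:ℝ) else 0)| * |1 - c - (β c - c) / deriv β c| := by
          rw [Real.norm_eq_abs, abs_mul, abs_mul]
      _ ≤ M * 1 * (1 + 2/δ) := by
          apply mul_le_mul (mul_le_mul (hM c) hind1 (abs_nonneg _) hM0)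
            hX (abs_nonneg _) (by positivity)
      _ = M * (1 + 2/δ) := by ring
  -- DU as a set integral with the indicator removed
  have hDU_eq : ∀ (e : ℝ → ℝ),
      DU β e = ∫ c in Set.Ioc (0:ℝ) 1, e c * (1 - c - (β c - c) / deriv β c) := by
    intro e
    rw [DU, intervalIntegral.integral_of_le (by norm_num : (0:ℝ) ≤ 1)]
    apply setIntegral_congr_fun measurableSet_Ioc
    intro c hc
    have hcI : c ∈ Set.Icc (0:ℝ) 1 := Set.Ioc_subset_Icc_self hc
    have : β 0 < β c := hsm h01 hcI hc.1
    simp [this]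
  refine ⟨?_, ?_, ?_, ?_⟩
  · -- the Gâteaux derivative limit
    set l := nhdsWithin (0:ℝ) {0}ᶜ with hl
    have hEU : ∀ ε : ℝ, EU (fun c => β c + ε * d c) β
        = ∫ c in Set.Ioc (0:ℝ) 1, Ffun β d ε c := by
      intro ε
      rw [EU, intervalIntegral.integral_of_le (by norm_num : (0:ℝ) ≤ 1)]
      rfl
    have hEU0 : EU β β = ∫ c in Set.Ioc (0:ℝ) 1, Ffun β d 0 c := by
      rw [EU, intervalIntegral.integral_of_le (by norm_num : (0:ℝ) ≤ 1)]
      apply setIntegral_congr_fun measurableSet_Ioc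
      intro c _
      simp [Ffun, Gf]
    have hFmeas : ∀ ε : ℝ, AEStronglyMeasurable (Ffun β d ε)
        (volume.restrict (Set.Ioc (0:ℝ) 1)) := by
      intro ε
      have hinner : AEMeasurable (fun c => β c + ε * d c)
          (volume.restrict (Set.Ioc (0:ℝ) 1)) :=
        hβae.add (hdm.const_mul ε).aemeasurable
      exact (((hinner.sub measurable_id.aemeasurable)).mul
        (hGcont.measurable.comp_aemeasurable hinner)).aestronglyMeasurable
    have hFint : ∀ ε : ℝ, IntegrableOn (Ffun β d ε) (Set.Ioc (0:ℝ) 1) volume := by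
      intro ε
      apply Integrable.mono' (integrable_const ((1 + |ε| * Md) * 1)) (hFmeas ε)
      filter_upwards [ae_restrict_mem measurableSet_Ioc] with c hc
      have hcI := Set.Ioc_subset_Icc_self hc
      have hβc := hrange c hcI
      have hb1 : |β c - c| ≤ 1 := by
        rw [abs_le]
        constructor
        · linarith [hβc.1, hcI.2]
        · linarith [hβc.2, hcI.1]
      have hb2 : |ε * d c| ≤ |ε| * Md := by
        rw [abs_mul]; exact mul_le_mul_of_nonneg_left (hMd c) (abs_nonneg ε)
      have h1 : |β c + ε * d c - c| ≤ 1 + |ε| * Md := by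
        calc |β c + ε * d c - c| = |(β c - c) + ε * d c| := by ring_nf
          _ ≤ |β c - c| + |ε * d c| := abs_add_le _ _
          _ ≤ 1 + |ε| * Md := add_le_add hb1 hb2
      have h2 : |Gf β (β c + ε * d c)| ≤ 1 :=
        abs_le.mpr ⟨by linarith [G_nonneg (β := β) (β c + ε * d c)], G_le_one _⟩
      calc ‖Ffun β d ε c‖ = |β c + ε * d c - c| * |Gf β (β c + ε * d c)| := by
            rw [Ffun, Real.norm_eq_abs, abs_mul]
        _ ≤ (1 + |ε| * Md) * 1 := by
            apply mul_le_mul h1 h2 (abs_nonneg _) (by positivity)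
    have hkey : ∀ ε : ℝ, ε⁻¹ * (EU (fun c => β c + ε * d c) β - EU β β)
        = ∫ c in Set.Ioc (0:ℝ) 1, ε⁻¹ * (Ffun β d ε c - Ffun β d 0 c) := by
      intro ε
      rw [hEU ε, hEU0, ← integral_sub (hFint ε) (hFint 0), ← smul_eq_mul,
        ← integral_smul]
      simp [smul_eq_mul]
    -- a.e. pointwise derivative
    have hderae : ∀ᵐ c ∂(volume.restrict (Set.Ioc (0:ℝ) 1)),
        HasDerivAt (fun ε => Ffun β d ε c) (d c * (1 - c - (β c - c) / deriv β c)) 0 := by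
      have hne1 : ∀ᵐ c : ℝ ∂(volume.restrict (Set.Ioc (0:ℝ) 1)), c ≠ 1 := by
        refine ae_restrict_of_ae ?_
        rw [ae_iff]
        have : {a : ℝ | ¬ a ≠ 1} = {1} := by ext a; simp
        rw [this, Real.volume_singleton]
      filter_upwards [ae_restrict_mem measurableSet_Ioc, ae_restrict_of_ae hd', hne1]
        with c hc hdc hc1
      have hcI : c ∈ Set.Icc (0:ℝ) 1 := Set.Ioc_subset_Icc_self hc
      have hb : δ ≤ deriv β c := hdc hcI
      have hbpos : 0 < deriv β c := lt_of_lt_of_le hδ hb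
      have hdiffb : DifferentiableAt ℝ β c := by
        by_contra h
        rw [deriv_zero_of_not_differentiableAt h] at hb; linarith
      have hder : HasDerivAt β (deriv β c) c := hdiffb.hasDerivAt
      have hcIoo : c ∈ Set.Ioo (0:ℝ) 1 := ⟨hc.1, lt_of_le_of_ne hc.2 hc1⟩
      have hGd := psi_hasDeriv hδ hcont hsm hgrow hcIoo hder hb
      have hinner : HasDerivAt (fun ε : ℝ => β c + ε * d c) (d c) 0 := by
        simpa using ((hasDerivAt_id (0:ℝ)).mul_const (d c)).const_add (β c)
      have hGc : HasDerivAt (fun ε : ℝ => Gf β (β c + ε * d c))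
          (-(deriv β c)⁻¹ * d c) 0 := by
        have hGd' : HasDerivAt (Gf β) (-(deriv β c)⁻¹)
            ((fun ε : ℝ => β c + ε * d c) 0) := by simpa using hGd
        exact hGd'.comp 0 hinner
      have hmul := (hinner.sub_const c).mul hGc
      refine hmul.congr_deriv ?_
      simp only [zero_mul, add_zero]
      rw [G_val hsm hcI]
      field_simp
      ring
    -- domination
    have hdom : ∀ᶠ ε in l, ∀ᵐ c ∂(volume.restrict (Set.Ioc (0:ℝ) 1)),
        ‖ε⁻¹ * (Ffun β d ε c - Ffun β d 0 c)‖ ≤ Md * (1 + 2/δ) := by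
      filter_upwards [self_mem_nhdsWithin] with ε hε
      have hεne : ε ≠ 0 := hε
      filter_upwards [ae_restrict_mem measurableSet_Ioc] with c hc
      have hcI := Set.Ioc_subset_Icc_self hc
      have hβc := hrange c hcI
      have hb1 : |β c - c| ≤ 1 := by
        rw [abs_le]
        constructor
        · linarith [hβc.1, hcI.2]
        · linarith [hβc.2, hcI.1]
      have hεd : |ε * d c| ≤ |ε| * Md := by
        rw [abs_mul]; exact mul_le_mul_of_nonneg_left (hMd c) (abs_nonneg ε)
      have hdiffF : Ffun β d ε c - Ffun β d 0 c = ε * d c * Gf β (β c + ε * d c)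
          + (β c - c) * (Gf β (β c + ε * d c) - Gf β (β c + 0 * d c)) := by
        simp only [Ffun]; ring
      have e1 : |Gf β (β c + ε * d c)| ≤ 1 :=
        abs_le.mpr ⟨by linarith [G_nonneg (β := β) (β c + ε * d c)], G_le_one _⟩
      have e2 : |Gf β (β c + ε * d c) - Gf β (β c + 0 * d c)| ≤ 2/δ * (|ε| * Md) := by
        calc |Gf β (β c + ε * d c) - Gf β (β c + 0 * d c)|
            ≤ 2/δ * |(β c + ε * d c) - (β c + 0 * d c)| := hGlip _ _
          _ = 2/δ * |ε * d c| := by congr 1; ring_nf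
          _ ≤ 2/δ * (|ε| * Md) := by
              apply mul_le_mul_of_nonneg_left hεd (by positivity)
      have hF1 : |Ffun β d ε c - Ffun β d 0 c| ≤ |ε| * (Md * (1 + 2/δ)) := by
        rw [hdiffF]
        calc |ε * d c * Gf β (β c + ε * d c)
              + (β c - c) * (Gf β (β c + ε * d c) - Gf β (β c + 0 * d c))|
            ≤ |ε * d c * Gf β (β c + ε * d c)|
              + |(β c - c) * (Gf β (β c + ε * d c) - Gf β (β c + 0 * d c))| := abs_add_le _ _
          _ ≤ |ε| * Md * 1 + 1 * (2/δ * (|ε| * Md)) := by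
              apply add_le_add
              · rw [abs_mul]
                apply mul_le_mul hεd e1 (abs_nonneg _) (by positivity)
              · rw [abs_mul]
                apply mul_le_mul hb1 e2 (abs_nonneg _) (by norm_num)
          _ = |ε| * (Md * (1 + 2/δ)) := by ring
      calc ‖ε⁻¹ * (Ffun β d ε c - Ffun β d 0 c)‖
          = |ε|⁻¹ * |Ffun β d ε c - Ffun β d 0 c| := by
            rw [Real.norm_eq_abs, abs_mul, abs_inv]
        _ ≤ |ε|⁻¹ * (|ε| * (Md * (1 + 2/δ))) := by
            apply mul_le_mul_of_nonneg_left hF1 (by positivity)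
        _ = Md * (1 + 2/δ) := by
            rw [← mul_assoc, inv_mul_cancel₀ (abs_ne_zero.mpr hεne), one_mul]
    -- dominated convergence
    have hlim : ∀ᵐ c ∂(volume.restrict (Set.Ioc (0:ℝ) 1)),
        Tendsto (fun ε => ε⁻¹ * (Ffun β d ε c - Ffun β d 0 c)) l
          (nhds (d c * (1 - c - (β c - c) / deriv β c))) := by
      filter_upwards [hderae] with c hder
      have := hasDerivAt_iff_tendsto_slope.mp hder
      refine this.congr fun ε => ?_
      rw [slope_def_field, sub_zero, div_eq_inv_mul]
    have hmain := tendsto_integral_filter_of_dominated_convergence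
      (μ := volume.restrict (Set.Ioc (0:ℝ) 1))
      (bound := fun _ => Md * (1 + 2/δ))
      (Eventually.of_forall fun ε => ((hFmeas ε).sub (hFmeas 0)).const_mul ε⁻¹)
      hdom (integrable_const _) hlim
    have hDUg : DU β d = ∫ c in Set.Ioc (0:ℝ) 1, d c * (1 - c - (β c - c) / deriv β c) :=
      hDU_eq d
    rw [hDUg]
    exact hmain.congr fun ε => (hkey ε).symm
  · -- norm bound
    rw [hDU_eq d, ← Real.norm_eq_abs]
    have hbd : ∀ᵐ c ∂(volume.restrict (Set.Ioc (0:ℝ) 1)),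
        ‖d c * (1 - c - (β c - c) / deriv β c)‖ ≤ Md * (1 + 2/δ) := by
      filter_upwards [ae_restrict_mem measurableSet_Ioc, ae_restrict_of_ae hd']
        with c hc hdc
      have hcI : c ∈ Set.Icc (0:ℝ) 1 := Set.Ioc_subset_Icc_self hc
      have hb : δ ≤ deriv β c := hdc hcI
      have hbpos : 0 < deriv β c := lt_of_lt_of_le hδ hb
      have hβc := hrange c hcI
      have habs1 : |β c - c| ≤ 1 := by
        rw [abs_le]
        constructor
        · linarith [hβc.1, hcI.2]
        · linarith [hβc.2, hcI.1]
      have hdiv : |(β c - c) / deriv β c| ≤ 1/δ := by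
        rw [abs_div, abs_of_pos hbpos]
        exact div_le_div₀ (by positivity) habs1 hδ hb
      have hX : |1 - c - (β c - c) / deriv β c| ≤ 1 + 2/δ := by
        have h1c : |1 - c| ≤ 1 := by
          rw [abs_le]; constructor <;> linarith [hcI.1, hcI.2]
        calc |1 - c - (β c - c) / deriv β c|
            ≤ |1 - c| + |(β c - c) / deriv β c| := abs_sub _ _
          _ ≤ 1 + 1/δ := add_le_add h1c hdiv
          _ ≤ 1 + 2/δ := by gcongr <;> norm_num
      calc ‖d c * (1 - c - (β c - c) / deriv β c)‖
          = |d c| * |1 - c - (β c - c) / deriv β c| := by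
            rw [Real.norm_eq_abs, abs_mul]
        _ ≤ Md * (1 + 2/δ) :=
            mul_le_mul (hMd c) hX (abs_nonneg _) hMd0
    calc ‖∫ c in Set.Ioc (0:ℝ) 1, d c * (1 - c - (β c - c) / deriv β c)‖
        ≤ ∫ _ in Set.Ioc (0:ℝ) 1, Md * (1 + 2/δ) :=
          norm_integral_le_of_norm_le (integrable_const _) hbd
      _ = Md * (1 + 2/δ) := by
          rw [setIntegral_const]
          rw [Measure.real, Real.volume_Ioc]
          norm_num
      _ = (1 + 2/δ) * Md := by ring
  · -- additivity
    rintro d₁ d₂ h1m h2m ⟨M1, hM1⟩ ⟨M2, hM2⟩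
    have hM1' : ∀ c, |d₁ c| ≤ |M1| := fun c => le_trans (hM1 c) (le_abs_self M1)
    have hM2' : ∀ c, |d₂ c| ≤ |M2| := fun c => le_trans (hM2 c) (le_abs_self M2)
    have i1 : IntervalIntegrable (fun c => d₁ c * (if β 0 < β c then (1:ℝ) else 0) *
        (1 - c - (β c - c) / deriv β c)) volume 0 1 := by
      rw [intervalIntegrable_iff, Set.uIoc_of_le (by norm_num : (0:ℝ) ≤ 1)]
      exact hDUint d₁ h1m |M1| hM1'
    have i2 : IntervalIntegrable (fun c => d₂ c * (if β 0 < β c then (1:ℝ) else 0) *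
        (1 - c - (β c - c) / deriv β c)) volume 0 1 := by
      rw [intervalIntegrable_iff, Set.uIoc_of_le (by norm_num : (0:ℝ) ≤ 1)]
      exact hDUint d₂ h2m |M2| hM2'
    rw [DU, DU, DU, ← intervalIntegral.integral_add i1 i2]
    apply intervalIntegral.integral_congr
    intro c _
    simp only [Pi.add_apply]
    ring
  · -- scalar homogeneity
    rintro a d₁ _ _
    rw [DU, DU, ← intervalIntegral.integral_const_mul]
    apply intervalIntegral.integral_congr
    intro c _
    simp only [Pi.smul_apply, smul_eq_mul]
    ring
end
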